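/- arXiv:1804.02939 — 5 statements merged into one kernel-verified Lean document; each statement's English description precedes it below -/
import Mathlib

section
/- Let n : ℕ, S : Set (Fin n), let X be a type with a multiplicative action of Equiv.Perm (Fin n), and let x : X. Define the relation rS on Fin n by rS u v ↔ (u ≠ v ∧ u ∉ S ∧ v ∉ S ∧ Equiv.swap u v • x = x). Then every permutation σ : Equiv.Perm (Fin n) such that EqvGen rS a (σ a) holds for all a : Fin n satisfies σ • x = x and σ s = s for all s ∈ S. (That is, the partition of Fin n into the equivalence classes of the equivalence closure of rS supports x relative to S.) -/
private lemma eqvGen_swap_aux {n : ℕ} (S : Set (Fin n)) {X : Type*}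
    [MulAction (Equiv.Perm (Fin n)) X] (x : X) {u v : Fin n}
    (h : Relation.EqvGen
      (fun u v : Fin n => u ≠ v ∧ u ∉ S ∧ v ∉ S ∧ Equiv.swap u v • x = x) u v) :
    u = v ∨ (u ∉ S ∧ v ∉ S ∧ Equiv.swap u v • x = x) := by
  induction h with
  | rel a b h => exact Or.inr ⟨h.2.1, h.2.2.1, h.2.2.2⟩
  | refl a => exact Or.inl rfl
  | symm a b _ ih =>
    rcases ih with rfl | ⟨ha, hb, hs⟩
    · exact Or.inl rfl
    · exact Or.inr ⟨hb, ha, by rwa [Equiv.swap_comm]⟩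
  | trans a b c _ _ ih1 ih2 =>
    rcases ih1 with rfl | ⟨ha, hb, hs1⟩
    · exact ih2
    rcases ih2 with rfl | ⟨hb', hc, hs2⟩
    · exact Or.inr ⟨ha, hb, hs1⟩
    by_cases hac : a = c
    · exact Or.inl hac
    refine Or.inr ⟨ha, hc, ?_⟩
    by_cases hab : a = b
    · subst hab; exact hs2
    by_cases hbc : b = c
    · subst hbc; exact hs1
    have key : Equiv.swap b a * Equiv.swap c b * Equiv.swap b a = Equiv.swap a c :=
      Equiv.swap_mul_swap_mul_swap (Ne.symm hbc) (fun h => hac h.symm)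
    calc Equiv.swap a c • x = (Equiv.swap b a * Equiv.swap c b * Equiv.swap b a) • x := by
          rw [key]
      _ = x := by
          rw [mul_smul, mul_smul, Equiv.swap_comm b a, hs1, Equiv.swap_comm c b, hs2, hs1]

private lemma eqvGen_mem_S {n : ℕ} (S : Set (Fin n)) {X : Type*}
    [MulAction (Equiv.Perm (Fin n)) X] (x : X) {u v : Fin n}
    (h : Relation.EqvGen
      (fun u v : Fin n => u ≠ v ∧ u ∉ S ∧ v ∉ S ∧ Equiv.swap u v • x = x) u v)
    (hu : u ∈ S) : u = v := by
  rcases eqvGen_swap_aux S x h with rfl | ⟨ha, _, _⟩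
  · rfl
  · exact absurd hu ha

theorem eqvGen_of_swaps_supports
    {n : ℕ} (S : Set (Fin n)) (X : Type*) [MulAction (Equiv.Perm (Fin n)) X]
    (x : X) :
    ∀ σ : Equiv.Perm (Fin n),
      (∀ a : Fin n,
        Relation.EqvGen
          (fun u v : Fin n => u ≠ v ∧ u ∉ S ∧ v ∉ S ∧ Equiv.swap u v • x = x)
          a (σ a)) →
      σ • x = x ∧ ∀ s ∈ S, σ s = s := by
  intro σ hσ
  refine ⟨?_, fun s hs => (eqvGen_mem_S S x (hσ s) hs).symm⟩
  -- strong induction on support card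
  generalize hk : σ.support.card = k
  induction k using Nat.strong_induction_on generalizing σ with
  | _ k ih =>
    by_cases h1 : σ = 1
    · subst h1; simp
    · obtain ⟨a, ha⟩ : ∃ a, σ a ≠ a := by
        by_contra h; push_neg at h
        exact h1 (Equiv.ext fun b => by simp [h b])
      have hrel := hσ a
      rcases eqvGen_swap_aux S x hrel with heq | ⟨_, _, hswap⟩
      · exact absurd heq.symm ha
      set τ := Equiv.swap a (σ a) * σ with hτ
      have hcard : τ.support.card < k := hk ▸ Equiv.Perm.card_support_swap_mul ha
      have hτx : τ • x = x := by
        apply ih _ hcard _ _ rfl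
        intro b
        have hb := hσ b
        by_cases h1' : σ b = a
        · have : τ b = σ a := by simp [hτ, h1', Equiv.Perm.mul_apply]
          rw [this]
          exact Relation.EqvGen.trans _ _ _ (h1' ▸ hb) hrel
        · by_cases h2' : σ b = σ a
          · have hba : b = a := σ.injective h2'
            subst hba
            have : τ b = b := by simp [hτ, Equiv.Perm.mul_apply]
            rw [this]
            exact Relation.EqvGen.refl b
          · have : τ b = σ b := by
              simp [hτ, Equiv.Perm.mul_apply, Equiv.swap_apply_of_ne_of_ne h1' h2']
            rw [this]
            exact hb
      have : σ = Equiv.swap a (σ a) * τ := by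
        rw [hτ, ← mul_assoc, Equiv.swap_mul_self, one_mul]
      rw [this, mul_smul, hτx, hswap]
end

section
/- Let n : ℕ, S : Set (Fin n), let X be a type with a multiplicative action of Equiv.Perm (Fin n), and let x : X. Define rS u v ↔ (u ≠ v ∧ u ∉ S ∧ v ∉ S ∧ Equiv.swap u v • x = x). Let e : Setoid (Fin n) be any equivalence relation such that every permutation σ : Equiv.Perm (Fin n) with e.Rel a (σ a) for all a : Fin n satisfies σ • x = x and σ s = s for all s ∈ S. Then for all u v : Fin n, e.Rel u v implies EqvGen rS u v. (That is, every partition supporting x relative to S refines the partition given by the equivalence closure of rS; hence that partition is the coarsest partition supporting the stabilizer of x inside the pointwise stabilizer of S.) -/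
theorem supporting_partition_refines_eqvGen_of_swaps
    {n : ℕ} (S : Set (Fin n)) (X : Type*) [MulAction (Equiv.Perm (Fin n)) X]
    (x : X) (e : Setoid (Fin n))
    (he : ∀ σ : Equiv.Perm (Fin n), (∀ a : Fin n, e.r a (σ a)) →
      σ • x = x ∧ ∀ s ∈ S, σ s = s) :
    ∀ u v : Fin n, e.r u v →
      Relation.EqvGen
        (fun u v : Fin n => u ≠ v ∧ u ∉ S ∧ v ∉ S ∧ Equiv.swap u v • x = x)
        u v := by
  intro u v huv
  by_cases hne : u = v
  · exact hne ▸ Relation.EqvGen.refl u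
  · have hσ : ∀ a : Fin n, e.r a (Equiv.swap u v a) := by
      intro a
      rcases eq_or_ne a u with rfl | hau
      · simpa using huv
      rcases eq_or_ne a v with rfl | hav
      · simpa using e.symm huv
      · rw [Equiv.swap_apply_of_ne_of_ne hau hav]
    obtain ⟨hx, hS⟩ := he (Equiv.swap u v) hσ
    refine Relation.EqvGen.rel _ _ ⟨hne, ?_, ?_, hx⟩
    · intro hu
      have := hS u hu
      rw [Equiv.swap_apply_left] at this
      exact hne this.symm
    · intro hv
      have := hS v hv
      rw [Equiv.swap_apply_right] at this
      exact hne this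
end

section
/- Let n : ℕ, S : Set (Fin n), let X be a type with a multiplicative action of Equiv.Perm (Fin n), and let x y : X. Then y lies in the orbit of x under the pointwise stabilizer of S (i.e. there exists σ : Equiv.Perm (Fin n) with σ s = s for all s ∈ S and σ • x = y) if, and only if, y belongs to every set M : Set X such that x ∈ M and M is closed under swaps outside S, i.e. for all u v : Fin n with u ≠ v, u ∉ S, v ∉ S and all z ∈ M, one has Equiv.swap u v • z ∈ M. -/
theorem mem_orbit_pointwiseStab_iff_mem_all_swap_closed_sets
    {n : ℕ} (S : Set (Fin n)) (X : Type*) [MulAction (Equiv.Perm (Fin n)) X]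
    (x y : X) :
    (∃ σ : Equiv.Perm (Fin n), (∀ s ∈ S, σ s = s) ∧ σ • x = y) ↔
      ∀ M : Set X, x ∈ M →
        (∀ u v : Fin n, u ≠ v → u ∉ S → v ∉ S → ∀ z ∈ M, Equiv.swap u v • z ∈ M) →
        y ∈ M := by
  classical
  constructor
  · rintro ⟨σ, hσ, rfl⟩ M hx hM
    set p : Fin n → Prop := fun a => a ∉ S with hp
    have h₁ : ∀ a, p a ↔ p (σ a) := by
      intro a
      constructor
      · intro ha hσa
        -- σ fixes S pointwise, so σ is injective on S; if σ a ∈ S...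
        -- σ permutes S since it fixes it pointwise
        exact ha (by simpa [hσ _ hσa] using (by
          have := σ.injective (hσ _ hσa)
          -- σ (σ a) = σ a since σ a ∈ S? no: hσ (σ a) hσa : σ (σ a) = σ a
          -- injective gives σ a = a
          exact this ▸ hσa))
      · intro ha has
        exact ha (by rw [hσ _ has]; exact has)
    have h₂ : ∀ a, σ a ≠ a → p a := by
      intro a hne
      by_contra ha
      exact hne (hσ _ ha)
    have key : ∀ τ : Equiv.Perm {a // p a}, (Equiv.Perm.ofSubtype τ) • x ∈ M := by
      intro τ
      refine Equiv.Perm.swap_induction_on τ (by simpa using hx) ?_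
      intro f u v huv hf
      rw [map_mul, Equiv.Perm.ofSubtype_swap_eq, mul_smul]
      exact hM u v (fun h => huv (Subtype.ext h)) u.2 v.2 _ hf
    have := key (σ.subtypePerm (fun a => (h₁ a).symm))
    rwa [Equiv.Perm.ofSubtype_subtypePerm (fun a => (h₁ a).symm) h₂] at this
  · intro h
    exact h {z | ∃ σ : Equiv.Perm (Fin n), (∀ s ∈ S, σ s = s) ∧ σ • x = z}
      ⟨1, fun s _ => rfl, one_smul _ _⟩
      (by
        rintro u v huv hu hv z ⟨σ, hσ, rfl⟩
        refine ⟨Equiv.swap u v * σ, fun s hs => ?_, by rw [mul_smul]⟩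
        rw [Equiv.Perm.mul_apply, hσ s hs,
          Equiv.swap_apply_of_ne_of_ne (by rintro rfl; exact hu hs) (by rintro rfl; exact hv hs)])
end

section
/- Let n : ℕ, S : Set (Fin n), let X be a finite type (Fintype X) with a multiplicative action of Equiv.Perm (Fin n), and let x : X. Define a sequence M : ℕ → Set X by M 0 = {x} and M (i+1) = M i ∪ { Equiv.swap u v • z | u v : Fin n, u ≠ v, u ∉ S, v ∉ S, z ∈ M i }. Then M (Fintype.card X) equals the orbit of x under the pointwise stabilizer of S, i.e. {y : X | ∃ σ : Equiv.Perm (Fin n), (∀ s ∈ S, σ s = s) ∧ σ • x = y}. (The iterative construction reaches the orbit after at most |X| iterations.) -/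
theorem orbit_reached_after_card_iterations
    {n : ℕ} (S : Set (Fin n)) (X : Type*) [Fintype X]
    [MulAction (Equiv.Perm (Fin n)) X] (x : X)
    (M : ℕ → Set X) (hM0 : M 0 = {x})
    (hMsucc : ∀ i : ℕ, M (i + 1) = M i ∪
      {w : X | ∃ u v : Fin n, u ≠ v ∧ u ∉ S ∧ v ∉ S ∧
        ∃ z ∈ M i, w = Equiv.swap u v • z}) :
    M (Fintype.card X) =
      {y : X | ∃ σ : Equiv.Perm (Fin n), (∀ s ∈ S, σ s = s) ∧ σ • x = y} := by
  classical
  have hmono : ∀ i, M i ⊆ M (i + 1) := by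
    intro i
    rw [hMsucc i]
    exact Set.subset_union_left
  have hchain : ∀ i j, i ≤ j → M i ⊆ M j := by
    intro i j hij
    induction j with
    | zero => simp [Nat.le_zero.mp hij]
    | succ j ih =>
      rcases Nat.lt_or_ge i (j + 1) with h | h
      · exact (ih (Nat.lt_succ_iff.mp h)).trans (hmono j)
      · have : i = j + 1 := le_antisymm hij h
        simp [this]
  -- forward inclusion
  have hfwd : ∀ i, M i ⊆ {y : X | ∃ σ : Equiv.Perm (Fin n), (∀ s ∈ S, σ s = s) ∧ σ • x = y} := by
    intro i
    induction i with
    | zero =>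
      rw [hM0]
      rintro y rfl
      exact ⟨1, fun s _ => rfl, one_smul _ _⟩
    | succ i ih =>
      rw [hMsucc i]
      rintro y (hy | ⟨u, v, huv, huS, hvS, z, hz, rfl⟩)
      · exact ih hy
      · obtain ⟨σ, hσ, rfl⟩ := ih hz
        refine ⟨Equiv.swap u v * σ, fun s hs => ?_, by rw [mul_smul]⟩
        have hsu : s ≠ u := fun h => huS (h ▸ hs)
        have hsv : s ≠ v := fun h => hvS (h ▸ hs)
        simp [Equiv.Perm.mul_apply, hσ s hs, Equiv.swap_apply_of_ne_of_ne hsu hsv]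
  -- stabilization
  have hstab : ∀ i, M i = M (i + 1) → ∀ j, M (i + j) = M i := by
    intro i hi j
    induction j with
    | zero => rfl
    | succ j ih =>
      rw [show i + (j + 1) = (i + j) + 1 by ring, hMsucc (i + j), ih, ← hMsucc i, ← hi]
  have hfin : ∀ s : Set X, s.Finite := fun s => s.toFinite
  have hgrow : ∀ i, (∀ j < i, M j ≠ M (j + 1)) → i + 1 ≤ (M i).ncard := by
    intro i
    induction i with
    | zero =>
      intro _
      simp [hM0]
    | succ i ih =>
      intro h
      have h1 : i + 1 ≤ (M i).ncard := ih fun j hj => h j (hj.trans (Nat.lt_succ_self i))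
      have h2 : (M i).ncard < (M (i + 1)).ncard :=
        Set.ncard_lt_ncard (ssubset_of_ne_of_subset (h i (Nat.lt_succ_self i)) (hmono i))
          (hfin _)
      omega
  have hexists : ∃ i ≤ Fintype.card X, M i = M (i + 1) := by
    by_contra h
    push_neg at h
    have := hgrow (Fintype.card X) (fun j hj => h j hj.le)
    have hle : (M (Fintype.card X)).ncard ≤ Fintype.card X := by
      have := Set.ncard_le_ncard (Set.subset_univ (M (Fintype.card X))) (hfin _)
      simpa [Set.ncard_univ] using this
    omega
  obtain ⟨i, hile, hieq⟩ := hexists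
  have hfix : M (Fintype.card X) = M i := by
    obtain ⟨j, hj⟩ := Nat.exists_eq_add_of_le hile
    rw [hj]; exact hstab i hieq j
  have hfix1 : M (Fintype.card X + 1) = M (Fintype.card X) := by
    obtain ⟨j, hj⟩ := Nat.exists_eq_add_of_le hile
    rw [hfix, show Fintype.card X + 1 = i + (j + 1) by omega, hstab i hieq (j + 1)]
  have hclosed : ∀ u v : Fin n, u ≠ v → u ∉ S → v ∉ S →
      ∀ z ∈ M (Fintype.card X), Equiv.swap u v • z ∈ M (Fintype.card X) := by
    intro u v huv hu hv z hz
    rw [← hfix1, hMsucc]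
    exact Or.inr ⟨u, v, huv, hu, hv, z, hz, rfl⟩
  have hx : x ∈ M (Fintype.card X) := hchain 0 _ (Nat.zero_le _) (by rw [hM0]; rfl)
  -- reverse inclusion
  have hrev : ∀ k (σ : Equiv.Perm (Fin n)), σ.support.card ≤ k →
      (∀ s ∈ S, σ s = s) → σ • x ∈ M (Fintype.card X) := by
    intro k
    induction k with
    | zero =>
      intro σ hc _
      have : σ = 1 := by
        rw [← Equiv.Perm.support_eq_empty_iff]
        exact Finset.card_eq_zero.mp (Nat.le_zero.mp hc)
      rw [this, one_smul]
      exact hx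
    | succ k ih =>
      intro σ hc hσ
      by_cases h1 : σ = 1
      · rw [h1, one_smul]; exact hx
      · obtain ⟨u, hu⟩ : ∃ u, σ u ≠ u := by
          by_contra h
          push_neg at h
          exact h1 (Equiv.ext h)
        have huS : u ∉ S := fun h => hu (hσ u h)
        have hσuS : σ u ∉ S := by
          intro h
          exact hu (σ.injective (hσ (σ u) h))
        set τ := Equiv.swap u (σ u) * σ with hτ
        have hτfix : ∀ s ∈ S, τ s = s := by
          intro s hs
          have hsu : s ≠ u := fun h => huS (h ▸ hs)
          have hsσ : s ≠ σ u := fun h => hσuS (h ▸ hs)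
          simp [hτ, Equiv.Perm.mul_apply, hσ s hs, Equiv.swap_apply_of_ne_of_ne hsu hsσ]
        have hcard : τ.support.card < σ.support.card := by
          simpa [hτ] using Equiv.Perm.card_support_swap_mul hu
        have hτx : τ • x ∈ M (Fintype.card X) := ih τ (by omega) hτfix
        have hσeq : σ = Equiv.swap u (σ u) * τ := by
          rw [hτ, ← mul_assoc, Equiv.swap_mul_self, one_mul]
        rw [hσeq, mul_smul]
        exact hclosed u (σ u) (Ne.symm hu) huS hσuS _ hτx
  ext y
  constructor
  · exact fun hy => hfwd _ hy
  · rintro ⟨σ, hσ, rfl⟩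
    exact hrev σ.support.card σ le_rfl hσ
end

section
/- Let α be a finite type with decidable equality and let r : α → α → Prop be any relation. Then the subgroup of Equiv.Perm α generated (Subgroup.closure) by the set of transpositions {Equiv.swap a b | a b : α, a ≠ b, r a b} is exactly the set of permutations σ : Equiv.Perm α such that EqvGen r a (σ a) holds for every a : α. (A permutation lies in the group generated by a set of transpositions if, and only if, it maps every point to a point in the same connected component of the relation generated by those transpositions.) -/
open Equiv Relation

private lemma swap_mem_closure {α : Type*} [Fintype α] [DecidableEq α]
    (r : α → α → Prop) {a b : α} (h : Relation.EqvGen r a b) (hne : a ≠ b) :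
    Equiv.swap a b ∈ Subgroup.closure
      {τ : Equiv.Perm α | ∃ a b : α, a ≠ b ∧ r a b ∧ τ = Equiv.swap a b} := by
  induction h with
  | rel a b h => exact Subgroup.subset_closure ⟨a, b, hne, h, rfl⟩
  | refl a => exact absurd rfl hne
  | symm a b h ih => rw [Equiv.swap_comm]; exact ih hne.symm
  | trans a b c hab hbc ihab ihbc =>
    by_cases h1 : a = b
    · subst h1; exact ihbc hne
    by_cases h2 : b = c
    · subst h2; exact ihab hne
    have key : Equiv.swap a c = Equiv.swap a b * Equiv.swap b c * Equiv.swap a b := by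
      have := Equiv.swap_apply_apply (Equiv.swap a b) b c
      rw [Equiv.swap_apply_right, Equiv.swap_apply_of_ne_of_ne (Ne.symm hne) (Ne.symm h2),
        Equiv.swap_inv] at this
      exact this
    rw [key]
    exact Subgroup.mul_mem _ (Subgroup.mul_mem _ (ihab h1) (ihbc h2)) (ihab h1)

theorem mem_closure_swaps_iff_eqvGen
    {α : Type*} [Fintype α] [DecidableEq α] (r : α → α → Prop) :
    ∀ σ : Equiv.Perm α,
      σ ∈ Subgroup.closure
          {τ : Equiv.Perm α | ∃ a b : α, a ≠ b ∧ r a b ∧ τ = Equiv.swap a b} ↔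
        ∀ a : α, Relation.EqvGen r a (σ a) := by
  intro σ
  constructor
  · intro h
    induction h using Subgroup.closure_induction with
    | mem τ hτ =>
      obtain ⟨a, b, hne, hr, rfl⟩ := hτ
      intro x
      rcases eq_or_ne x a with rfl | hxa
      · rw [Equiv.swap_apply_left]; exact EqvGen.rel _ _ hr
      rcases eq_or_ne x b with rfl | hxb
      · rw [Equiv.swap_apply_right]; exact EqvGen.symm _ _ (EqvGen.rel _ _ hr)
      · rw [Equiv.swap_apply_of_ne_of_ne hxa hxb]; exact EqvGen.refl x
    | one => intro a; exact EqvGen.refl a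
    | mul σ π _ _ ihσ ihπ =>
      intro a
      exact EqvGen.trans _ _ _ (ihπ a) (ihσ (π a))
    | inv σ _ ih =>
      intro a
      have := ih (σ⁻¹ a)
      rw [Equiv.Perm.coe_inv, Equiv.apply_symm_apply] at this
      exact this.symm _ _
  · intro h
    suffices H : ∀ n (σ : Equiv.Perm α), σ.support.card ≤ n →
        (∀ a : α, Relation.EqvGen r a (σ a)) →
        σ ∈ Subgroup.closure
          {τ : Equiv.Perm α | ∃ a b : α, a ≠ b ∧ r a b ∧ τ = Equiv.swap a b} from
      H σ.support.card σ le_rfl h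
    intro n
    induction n with
    | zero =>
      intro σ hcard _
      have : σ = 1 := by
        rw [← Equiv.Perm.support_eq_empty_iff, ← Finset.card_eq_zero]
        omega
      rw [this]; exact Subgroup.one_mem _
    | succ n ih =>
      intro σ hcard hσ
      rcases eq_or_ne σ 1 with rfl | hone
      · exact Subgroup.one_mem _
      obtain ⟨a, ha⟩ : ∃ a, σ a ≠ a := by
        by_contra hc
        push_neg at hc
        exact hone (Equiv.ext hc)
      set τ : Equiv.Perm α := Equiv.swap a (σ a) * σ with hτ
      have hτa : τ a = a := by simp [hτ]
      have hsub : τ.support ⊆ σ.support.erase a := by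
        intro x hx
        rw [Equiv.Perm.mem_support] at hx
        rw [Finset.mem_erase, Equiv.Perm.mem_support]
        constructor
        · rintro rfl; exact hx hτa
        · intro hσx
          apply hx
          simp only [hτ, Equiv.Perm.mul_apply, hσx]
          apply Equiv.swap_apply_of_ne_of_ne
          · rintro rfl; exact hx hτa
          · rintro rfl
            exact ha (σ.injective hσx)
      have hcard' : τ.support.card ≤ n := by
        have h1 := Finset.card_le_card hsub
        have h2 : a ∈ σ.support := Equiv.Perm.mem_support.mpr ha
        have := Finset.card_erase_of_mem h2
        omega
      have hτgen : ∀ x : α, Relation.EqvGen r x (τ x) := by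
        intro x
        refine EqvGen.trans _ _ _ (hσ x) ?_
        simp only [hτ, Equiv.Perm.mul_apply]
        rcases eq_or_ne (σ x) a with hxa | hxa
        · rw [hxa, Equiv.swap_apply_left]
          exact hσ a
        rcases eq_or_ne (σ x) (σ a) with hxb | hxb
        · rw [hxb, Equiv.swap_apply_right]
          exact EqvGen.symm _ _ (hσ a)
        · rw [Equiv.swap_apply_of_ne_of_ne hxa hxb]
          exact EqvGen.refl _
      have hτmem := ih τ hcard' hτgen
      have hswap := swap_mem_closure r (hσ a) (Ne.symm ha)
      have : σ = Equiv.swap a (σ a) * τ := by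
        rw [hτ, ← mul_assoc, Equiv.swap_mul_self, one_mul]
      rw [this]
      exact Subgroup.mul_mem _ hswap hτmem
end
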